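/- Under the same hypotheses as the Goethals–Seidel construction, the 4v × 4v block matrix P = [-C_1, C_2R, C_3R, C_4R; C_3R, RC_4, C_1, -RC_2; C_2R, C_1, -RC_4, RC_3; C_4R, -RC_3, RC_2, C_1] (the Propus array) satisfies P P^T = 4v I_{4v}, i.e., P is a Hadamard matrix of order 4v. -/
import Mathlib
set_option linter.unusedSectionVars false

open Matrix

namespace Propus

variable {v : ℕ} [NeZero v]

def circ (b : ZMod v → ℤ) : Matrix (ZMod v) (ZMod v) ℤ :=
  Matrix.of fun i k => b (k - i)

def rev (b : ZMod v → ℤ) : ZMod v → ℤ := fun i => b (-i)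

@[simp] lemma rev_rev (b : ZMod v → ℤ) : rev (rev b) = b := by
  funext i; simp [rev]

lemma circ_apply (b : ZMod v → ℤ) (i k : ZMod v) : circ b i k = b (k - i) := rfl

lemma transpose_circ (b : ZMod v → ℤ) : (circ b)ᵀ = circ (rev b) := by
  ext i k
  simp only [transpose_apply, circ_apply, rev]
  congr 1
  ring

lemma circ_comm (b c : ZMod v → ℤ) : circ b * circ c = circ c * circ b := by
  ext x y
  simp only [mul_apply, circ_apply]
  refine Fintype.sum_equiv (Equiv.subLeft (x + y)) _ _ fun z => ?_
  simp only [Equiv.subLeft_apply]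
  rw [mul_comm]
  congr 1 <;> · congr 1; ring

section R

variable (R : Matrix (ZMod v) (ZMod v) ℤ)
    (hR : ∀ i j, R i j = if i + j = -1 then 1 else 0)

include hR

lemma R_mul (M : Matrix (ZMod v) (ZMod v) ℤ) (i k : ZMod v) :
    (R * M) i k = M (-1 - i) k := by
  rw [mul_apply]
  rw [Finset.sum_eq_single (-1 - i)]
  · rw [hR]; simp
  · intro z _ hz
    rw [hR]
    have : ¬ (i + z = -1) := by
      intro h; apply hz; rw [← h]; ring
    simp [this]
  · simp

lemma mul_R (M : Matrix (ZMod v) (ZMod v) ℤ) (i k : ZMod v) :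
    (M * R) i k = M i (-1 - k) := by
  rw [mul_apply]
  rw [Finset.sum_eq_single (-1 - k)]
  · rw [hR]; simp
  · intro z _ hz
    rw [hR]
    have : ¬ (z + k = -1) := by
      intro h; apply hz; rw [← h]; ring
    simp [this]
  · simp

lemma transpose_R : Rᵀ = R := by
  ext i k; rw [transpose_apply, hR, hR, add_comm]

lemma R_mul_R (M : Matrix (ZMod v) (ZMod v) ℤ) : M * R * R = M := by
  ext i k
  rw [mul_R R hR, mul_R R hR]
  congr 1
  ring

lemma RC_eq (c : ZMod v → ℤ) : R * circ c = circ (rev c) * R := by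
  ext i k
  rw [R_mul R hR, mul_R R hR, circ_apply, circ_apply, rev]
  congr 1
  ring

lemma RC_eq' (X : Matrix (ZMod v) (ZMod v) ℤ) (c : ZMod v → ℤ) :
    X * R * circ c = X * circ (rev c) * R := by
  rw [mul_assoc, RC_eq R hR, ← mul_assoc]

end R

section Sum

variable (a : Fin 4 → ZMod v → ℤ)

lemma sumCC (hpm : ∀ j i, a j i = 1 ∨ a j i = -1)
    (hpaf : ∀ s : ZMod v, s ≠ 0 → ∑ j : Fin 4, ∑ i : ZMod v, a j i * a j (i + s) = 0) :
    ∑ j : Fin 4, circ (a j) * circ (rev (a j)) =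
      (4 * (v : ℤ)) • (1 : Matrix (ZMod v) (ZMod v) ℤ) := by
  ext x y
  rw [Matrix.sum_apply, Matrix.smul_apply, Matrix.one_apply]
  by_cases h : x = y
  · subst h
    rw [if_pos rfl]
    have h1 : ∀ j : Fin 4, ∑ z : ZMod v, circ (a j) x z * circ (rev (a j)) z x = (v : ℤ) := by
      intro j
      have h2 : ∀ z : ZMod v, circ (a j) x z * circ (rev (a j)) z x = 1 := by
        intro z
        rw [circ_apply, circ_apply, rev, neg_sub]
        rcases hpm j (z - x) with h | h <;> rw [h] <;> norm_num
      rw [Finset.sum_congr rfl fun z _ => h2 z]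
      simp [Finset.card_univ, ZMod.card]
    have : ∀ j : Fin 4, (circ (a j) * circ (rev (a j))) x x = (v : ℤ) := by
      intro j; rw [mul_apply]; exact h1 j
    rw [Finset.sum_congr rfl fun j _ => this j]
    simp
  · rw [if_neg h, smul_zero]
    have hs : x - y ≠ 0 := sub_ne_zero.mpr h
    have hp := hpaf (x - y) hs
    rw [← hp]
    refine Finset.sum_congr rfl fun j _ => ?_
    rw [mul_apply]
    refine (Fintype.sum_equiv (Equiv.addRight x) _ _ fun i => ?_).symm
    rw [Equiv.coe_addRight, circ_apply, circ_apply, rev]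
    congr 2
    · ring
    · ring

end Sum

end Propus

open Matrix Propus in
/-- The Propus array built from four circulant `±1`-matrices whose periodic
autocorrelations sum to zero is a Hadamard matrix of order `4v`: `P Pᵀ = 4v I`. -/
theorem stmt13 (v : ℕ) [NeZero v] (a : Fin 4 → ZMod v → ℤ)
    (hpm : ∀ j i, a j i = 1 ∨ a j i = -1)
    (hpaf : ∀ s : ZMod v, s ≠ 0 → ∑ j : Fin 4, ∑ i : ZMod v, a j i * a j (i + s) = 0)
    (C : Fin 4 → Matrix (ZMod v) (ZMod v) ℤ)
    (hC : ∀ j i k, C j i k = a j (k - i))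
    (R : Matrix (ZMod v) (ZMod v) ℤ)
    (hR : ∀ i j, R i j = if i + j = -1 then 1 else 0)
    (P : Matrix (Fin 4 × ZMod v) (Fin 4 × ZMod v) ℤ)
    (hP : ∀ p q : Fin 4 × ZMod v, P p q =
      (![![-(C 0), C 1 * R, C 2 * R, C 3 * R],
         ![C 2 * R, R * C 3, C 0, -(R * C 1)],
         ![C 1 * R, C 0, -(R * C 3), R * C 2],
         ![C 3 * R, -(R * C 2), R * C 1, C 0]] p.1 q.1) p.2 q.2) :
    P * P.transpose = (4 * (v : ℤ)) • (1 : Matrix (Fin 4 × ZMod v) (Fin 4 × ZMod v) ℤ) := by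
  have hC' : ∀ j, C j = circ (a j) := by
    intro j; ext i k; rw [hC]; rfl
  set G : Fin 4 → Fin 4 → Matrix (ZMod v) (ZMod v) ℤ :=
      ![![-(C 0), C 1 * R, C 2 * R, C 3 * R],
        ![C 2 * R, R * C 3, C 0, -(R * C 1)],
        ![C 1 * R, C 0, -(R * C 3), R * C 2],
        ![C 3 * R, -(R * C 2), R * C 1, C 0]] with hG
  have hS := sumCC a hpm hpaf
  have hS' : ∑ j : Fin 4, circ (a j) * circ (rev (a j)) =
      4 * ((v : ℕ) : Matrix (ZMod v) (ZMod v) ℤ) := by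
    rw [hS, zsmul_eq_mul, mul_one]
    push_cast
    ring
  have key : ∀ j k : Fin 4, ∑ l : Fin 4, G j l * (G k l)ᵀ =
      (if j = k then (4 * (v : ℤ)) • (1 : Matrix (ZMod v) (ZMod v) ℤ) else 0) := by
    intro j k
    fin_cases j <;> fin_cases k <;>
      simp [hG, Fin.sum_univ_four, Fin.isValue, Matrix.cons_val_zero,
        Matrix.cons_val_one, Matrix.head_cons, Matrix.cons_val_two, Matrix.tail_cons,
        Matrix.cons_val_three, Matrix.cons_val', Matrix.empty_val', Matrix.cons_val_fin_one,
        reduceIte, hC', transpose_neg, transpose_mul, transpose_circ,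
        transpose_R R hR, rev_rev, neg_mul, mul_neg, neg_neg,
        RC_eq R hR, RC_eq' R hR, ← mul_assoc, R_mul_R R hR]
    · rw [← hS', Fin.sum_univ_four]
    · rw [circ_comm (a 0) (a 2), circ_comm (a 1) (a 3)]; abel
    · rw [circ_comm (a 0) (a 1), circ_comm (a 2) (a 3)]; abel
    · rw [circ_comm (a 0) (a 3), circ_comm (a 1) (a 2)]; abel
    · rw [circ_comm (a 2) (a 0), circ_comm (rev (a 3)) (rev (a 1))]; abel
    · rw [circ_comm (rev (a 3)) (a 3), circ_comm (rev (a 1)) (a 1), ← hS', Fin.sum_univ_four]; abel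
    · rw [circ_comm (a 2) (rev (a 1)), circ_comm (rev (a 3)) (a 0)]; abel
    · rw [circ_comm (a 2) (rev (a 3)), circ_comm (a 0) (rev (a 1))]; abel
    · rw [circ_comm (a 1) (a 0), circ_comm (rev (a 3)) (rev (a 2))]; abel
    · rw [circ_comm (a 1) (rev (a 2)), circ_comm (a 0) (rev (a 3))]; abel
    · rw [circ_comm (rev (a 3)) (a 3), circ_comm (rev (a 2)) (a 2), ← hS', Fin.sum_univ_four]; abel
    · rw [circ_comm (a 1) (rev (a 3)), circ_comm (a 0) (rev (a 2))]; abel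
    · rw [circ_comm (a 3) (a 0), circ_comm (rev (a 2)) (rev (a 1))]; abel
    · rw [circ_comm (a 3) (rev (a 2)), circ_comm (rev (a 1)) (a 0)]; abel
    · rw [circ_comm (a 3) (rev (a 1)), circ_comm (rev (a 2)) (a 0)]; abel
    · rw [circ_comm (rev (a 2)) (a 2), circ_comm (rev (a 1)) (a 1), ← hS', Fin.sum_univ_four]; abel
  have hPP : ∀ (j k : Fin 4) (x y : ZMod v), (P * Pᵀ) (j, x) (k, y) =
      (∑ l : Fin 4, G j l * (G k l)ᵀ) x y := by
    intro j k x y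
    rw [mul_apply, Fintype.sum_prod_type, Matrix.sum_apply]
    refine Finset.sum_congr rfl fun l _ => ?_
    rw [mul_apply]
    refine Finset.sum_congr rfl fun z _ => ?_
    simp only [hP, transpose_apply]
  ext ⟨j, x⟩ ⟨k, y⟩
  rw [hPP j k x y, key j k]
  by_cases h : j = k
  · subst h
    simp [Matrix.one_apply, Prod.ext_iff]
  · simp [Matrix.one_apply, Prod.ext_iff, h]
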